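/- Let N, K be positive natural numbers, β ≥ 0, and let a, b : Fin N → Fin K → ℝ be the score matrices of a model on two datasets X' and X''. Let p(c) and q(c) be the Gibbs posteriors over classifiers c : Fin N → Fin K built from a and b respectively at inverse temperature β, and let the prior be uniform, π(c) = 1/K^N. Then the empirical posterior agreement kernel satisfies log(∑_{c : Fin N → Fin K} p(c) q(c) / π(c)) = log(K^N · ∏_{i=1}^N ∑_{j=1}^K p_i(j) q_i(j)), where p_i(j) = exp(β·(a i j)) / ∑_{l} exp(β·(a i l)) and q_i(j) = exp(β·(b i j)) / ∑_{l} exp(β·(b i l)). -/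
import Mathlib


open Finset Real

/-- The Gibbs posterior over classifiers `c : Fin N → Fin K` for the score
matrix `F` at inverse temperature `β`. -/
noncomputable def gibbsPosterior {N K : ℕ} (β : ℝ) (F : Fin N → Fin K → ℝ)
    (c : Fin N → Fin K) : ℝ :=
  Real.exp (β * ∑ i : Fin N, F i (c i)) /
    ∑ c' : Fin N → Fin K, Real.exp (β * ∑ i : Fin N, F i (c' i))

/-- The per-observation softmax posterior for row `i` of the score matrix `F`
at inverse temperature `β`. -/
noncomputable def softmaxPosterior {N K : ℕ} (β : ℝ) (F : Fin N → Fin K → ℝ)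
    (i : Fin N) (j : Fin K) : ℝ :=
  Real.exp (β * F i j) / ∑ l : Fin K, Real.exp (β * F i l)

lemma sum_fn_prod {N K : ℕ} (f : Fin N → Fin K → ℝ) :
    ∑ c : Fin N → Fin K, ∏ i : Fin N, f i (c i) = ∏ i : Fin N, ∑ j : Fin K, f i j := by
  rw [Finset.prod_univ_sum]
  simp [Fintype.piFinset_univ]

lemma gibbs_eq_prod {N K : ℕ} (β : ℝ) (F : Fin N → Fin K → ℝ) (c : Fin N → Fin K) :
    gibbsPosterior β F c = ∏ i : Fin N, softmaxPosterior β F i (c i) := by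
  unfold gibbsPosterior softmaxPosterior
  have hZ : ∑ c' : Fin N → Fin K, Real.exp (β * ∑ i : Fin N, F i (c' i))
      = ∏ i : Fin N, ∑ l : Fin K, Real.exp (β * F i l) := by
    rw [← sum_fn_prod fun i l => Real.exp (β * F i l)]
    congr 1; funext c'
    rw [← Real.exp_sum, Finset.mul_sum]
  rw [hZ, Finset.prod_div_distrib]
  congr 1
  rw [Finset.mul_sum, Real.exp_sum]

/-- **Theorem 2 (operative formula for the empirical posterior agreement
kernel).** With uniform prior `π(c) = 1 / K ^ N` over the `K ^ N` classifiers,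
`log (∑ c, p(c) q(c) / π(c)) = log (K ^ N · ∏ i, ∑ j, pᵢ(j) qᵢ(j))`. -/
theorem empirical_posterior_agreement_kernel_formula (N K : ℕ)
    (hN : 0 < N) (hK : 0 < K) (β : ℝ) (hβ : 0 ≤ β)
    (a b : Fin N → Fin K → ℝ) :
    Real.log (∑ c : Fin N → Fin K,
        gibbsPosterior β a c * gibbsPosterior β b c / (1 / (K : ℝ) ^ N)) =
      Real.log ((K : ℝ) ^ N *
        ∏ i : Fin N, ∑ j : Fin K,
          softmaxPosterior β a i j * softmaxPosterior β b i j) := by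
  congr 1
  have h : ∀ c : Fin N → Fin K,
      gibbsPosterior β a c * gibbsPosterior β b c / (1 / (K : ℝ) ^ N)
        = (K : ℝ) ^ N * ∏ i : Fin N, softmaxPosterior β a i (c i) * softmaxPosterior β b i (c i) := by
    intro c
    rw [gibbs_eq_prod, gibbs_eq_prod, ← Finset.prod_mul_distrib,
      div_div_eq_mul_div, div_one, mul_comm]
  simp_rw [h]
  rw [← Finset.mul_sum, sum_fn_prod fun i j => softmaxPosterior β a i j * softmaxPosterior β b i j]
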